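/- Let n ≥ 2 be an integer and set r = ⌈n/2⌉. Then the n×n integer matrices W_Q(A_n) and (the block-diagonal matrix) W̄_Q(A_n) ⊕ O_{n−r} are equivalent over ℤ; that is, there exist integer matrices U, V of size n×n with determinant ±1 such that U · W_Q(A_n) · V = W̄_Q(A_n) ⊕ O_{n−r}, where O_{n−r} is the (n−r)×(n−r) zero matrix. (Consequently they have the same Smith normal form.) -/

import Mathlib

open Matrix BigOperators Polynomial

/-- The signless Laplacian `Q = A + D` of the Dynkin (path) graph `A_n`,
with `0`-based indexing: adjacency entries `1` when `|i - j| = 1`, and degree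
diagonal `1` at the endpoints and `2` in the interior. -/
def QmatAn (n : ℕ) : Matrix (Fin n) (Fin n) ℤ :=
  Matrix.of fun i j =>
    (if (i : ℕ) + 1 = (j : ℕ) ∨ (j : ℕ) + 1 = (i : ℕ) then 1 else 0) +
    (if i = j then (if (i : ℕ) = 0 ∨ (i : ℕ) = n - 1 then 1 else 2) else 0)

/-- The `Q`-walk matrix of `A_n`: its `j`-th column is `Q^j · e_n` (0-based `j`). -/
def WQAn (n : ℕ) : Matrix (Fin n) (Fin n) ℤ :=
  Matrix.of fun i j => ((QmatAn n) ^ (j : ℕ)).mulVec (fun _ => 1) i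

namespace WQAnAux

abbrev rr (n : ℕ) : ℕ := (n + 1) / 2

def σn (n : ℕ) (i : Fin n) : Fin n := ⟨n - 1 - i.val, by have := i.isLt; omega⟩

def fold (n : ℕ) (i : Fin n) : Fin (rr n) :=
  ⟨min i.val (n - 1 - i.val), by have := i.isLt; simp only [rr]; omega⟩

def emb (n : ℕ) (k : Fin (rr n)) : Fin n :=
  ⟨k.val, by have := k.isLt; simp only [rr] at this; omega⟩

lemma sigma_invol (n : ℕ) (i : Fin n) : σn n (σn n i) = i := by
  have := i.isLt; apply Fin.ext; simp [σn]; omega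

lemma fold_sigma (n : ℕ) (i : Fin n) : fold n (σn n i) = fold n i := by
  have := i.isLt; apply Fin.ext; simp [fold, σn]; omega

lemma fold_emb (n : ℕ) (k : Fin (rr n)) : fold n (emb n k) = k := by
  have := k.isLt; simp only [rr] at this
  apply Fin.ext; simp [fold, emb]; omega

lemma Qsymm (n : ℕ) (i j : Fin n) : QmatAn n (σn n i) (σn n j) = QmatAn n i j := by
  rcases i with ⟨i, hi⟩; rcases j with ⟨j, hj⟩
  simp only [QmatAn, σn, Matrix.of_apply, Fin.mk.injEq]
  split_ifs <;> omega

def σperm (n : ℕ) : Equiv.Perm (Fin n) :=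
  Function.Involutive.toPerm (σn n) (sigma_invol n)

lemma mulVec_symm (n : ℕ) (v : Fin n → ℤ) (hv : ∀ i, v (σn n i) = v i) (i : Fin n) :
    (QmatAn n).mulVec v (σn n i) = (QmatAn n).mulVec v i := by
  show ∑ j, QmatAn n (σn n i) j * v j = ∑ j, QmatAn n i j * v j
  rw [← Equiv.sum_comp (σperm n) (fun j => QmatAn n (σn n i) j * v j)]
  apply Finset.sum_congr rfl
  intro j _
  show QmatAn n (σn n i) (σn n j) * v (σn n j) = _
  rw [Qsymm, hv]

lemma symm_eq_emb_fold (n : ℕ) (v : Fin n → ℤ) (hv : ∀ i, v (σn n i) = v i) (i : Fin n) :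
    v i = v (emb n (fold n i)) := by
  have hi := i.isLt
  by_cases h : (i : ℕ) ≤ n - 1 - (i : ℕ)
  · congr 1; apply Fin.ext; simp [emb, fold]; omega
  · have he : emb n (fold n i) = σn n i := by
      apply Fin.ext; simp [emb, fold, σn]; omega
    rw [he, hv]

def Mmat (n : ℕ) : Matrix (Fin (rr n)) (Fin (rr n)) ℤ :=
  Matrix.of fun i k => ∑ j : Fin n, if fold n j = k then QmatAn n (emb n i) j else 0

lemma key_emb (n : ℕ) (x : Fin (rr n) → ℤ) (k : Fin (rr n)) :
    (QmatAn n).mulVec (fun i => x (fold n i)) (emb n k) = (Mmat n).mulVec x k := by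
  show ∑ j, QmatAn n (emb n k) j * x (fold n j)
      = ∑ k', (∑ j : Fin n, if fold n j = k' then QmatAn n (emb n k) j else 0) * x k'
  simp only [Finset.sum_mul, ite_mul, zero_mul]
  rw [Finset.sum_comm]
  apply Finset.sum_congr rfl
  intro j _
  simp [Finset.sum_ite_eq]

lemma key (n : ℕ) (x : Fin (rr n) → ℤ) :
    (QmatAn n).mulVec (fun i => x (fold n i)) = fun i => (Mmat n).mulVec x (fold n i) := by
  have hsymm : ∀ i, (fun i' => x (fold n i')) (σn n i) = (fun i' => x (fold n i')) i := by
    intro i; simp [fold_sigma]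
  funext i
  rw [symm_eq_emb_fold n _ (mulVec_symm n _ hsymm) i]
  exact key_emb n x (fold n i)

lemma pow_col (n : ℕ) (j : ℕ) :
    ((QmatAn n) ^ j).mulVec (fun _ => 1)
      = fun i => ((Mmat n) ^ j).mulVec (fun _ => 1) (fold n i) := by
  induction j with
  | zero => simp [Matrix.one_mulVec]
  | succ j ih =>
    rw [pow_succ', ← Matrix.mulVec_mulVec, ih,
      key n (((Mmat n) ^ j).mulVec fun _ => 1)]
    funext i
    rw [Matrix.mulVec_mulVec, ← pow_succ']

lemma col_rel (n : ℕ) (h : 0 < rr n) (j : ℕ) :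
    ((Mmat n) ^ j) = ∑ k ∈ Finset.range (rr n),
      (((X : ℤ[X]) ^ j %ₘ (Mmat n).charpoly).coeff k) • (Mmat n) ^ k := by
  have hp : (Mmat n).charpoly.Monic := Matrix.charpoly_monic _
  have hdeg : (Mmat n).charpoly.natDegree = rr n := by simp
  have h1 : (Mmat n) ^ j = aeval (Mmat n) ((X : ℤ[X]) ^ j %ₘ (Mmat n).charpoly) := by
    conv_lhs => rw [show (Mmat n) ^ j = aeval (Mmat n) ((X : ℤ[X]) ^ j) by simp,
      ← Polynomial.modByMonic_add_div ((X : ℤ[X]) ^ j) (Mmat n).charpoly]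
    simp [Matrix.aeval_self_charpoly]
  have hlt : ((X : ℤ[X]) ^ j %ₘ (Mmat n).charpoly).natDegree < rr n := by
    rcases eq_or_ne ((X : ℤ[X]) ^ j %ₘ (Mmat n).charpoly) 0 with h0 | h0
    · simpa [h0] using h
    · have hd := Polynomial.degree_modByMonic_lt ((X : ℤ[X]) ^ j) hp
      rw [Polynomial.degree_eq_natDegree hp.ne_zero, hdeg] at hd
      rw [Polynomial.natDegree_lt_iff_degree_lt h0]
      exact_mod_cast hd
  rw [h1, Polynomial.aeval_eq_sum_range' hlt]

/-- The `j`-th walk vector, with a natural-number exponent. -/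
def Wc (n : ℕ) (i : Fin n) (j : ℕ) : ℤ := ((QmatAn n) ^ j).mulVec (fun _ => 1) i

lemma Wc_fold (n : ℕ) (i : Fin n) (j : ℕ) :
    Wc n i j = ((Mmat n) ^ j).mulVec (fun _ => 1) (fold n i) := by
  unfold Wc; rw [pow_col]

lemma Wc_symm (n : ℕ) (i : Fin n) (j : ℕ) : Wc n (σn n i) j = Wc n i j := by
  rw [Wc_fold, Wc_fold, fold_sigma]

lemma Wc_rel (n : ℕ) (h : 0 < rr n) (i : Fin n) (j : ℕ) :
    Wc n i j = ∑ t ∈ Finset.range (rr n),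
      (((X : ℤ[X]) ^ j %ₘ (Mmat n).charpoly).coeff t) * Wc n i t := by
  have hc := fun t => Wc_fold n i t
  rw [Wc_fold, col_rel n h j]
  simp only [Matrix.mulVec, dotProduct, Matrix.sum_apply, Matrix.smul_apply,
    smul_eq_mul, Finset.sum_mul, mul_one, hc]
  rw [Finset.sum_comm]
  apply Finset.sum_congr rfl
  intro t _
  rw [Finset.mul_sum]

end WQAnAux

open WQAnAux in
/-- `W_Q(A_n)` is equivalent over `ℤ` to the block diagonal matrix
`W̄_Q(A_n) ⊕ O_{n-r}`, where `r = ⌈n/2⌉` and `W̄_Q(A_n)` is the leading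
principal `r × r` submatrix of `W_Q(A_n)`. -/
theorem WQAn_equiv_block (n : ℕ) (hn : 2 ≤ n) (r : ℕ) (hr : r = (n + 1) / 2) :
    ∃ U V : Matrix (Fin n) (Fin n) ℤ,
      (U.det = 1 ∨ U.det = -1) ∧ (V.det = 1 ∨ V.det = -1) ∧
      U * WQAn n * V =
        Matrix.of (fun (i j : Fin n) => if (i : ℕ) < r ∧ (j : ℕ) < r then WQAn n i j else 0) := by
  have hrr : rr n = r := hr.symm
  have hrpos : 0 < rr n := by simp only [rr]; omega
  have hrn : rr n ≤ n := by simp only [rr]; omega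
  have hrr2 : 2 * rr n ≥ n := by simp only [rr]; omega
  set p : ℤ[X] := (Mmat n).charpoly with hp
  set U : Matrix (Fin n) (Fin n) ℤ := Matrix.of fun i j =>
    if i = j then 1 else if rr n ≤ (i : ℕ) ∧ j = σn n i then -1 else 0 with hU
  set V : Matrix (Fin n) (Fin n) ℤ := Matrix.of fun k j =>
    if k = j then 1 else if (k : ℕ) < rr n ∧ rr n ≤ (j : ℕ) then
      -(((X : ℤ[X]) ^ (j : ℕ) %ₘ p).coeff (k : ℕ)) else 0 with hV
  have hUe : ∀ i k : Fin n, U i k = (if i = k then 1 else 0) +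
      (if rr n ≤ (i : ℕ) ∧ k = σn n i then -1 else 0) := by
    intro i k
    by_cases h1 : i = k
    · subst h1
      have hns : ¬ (rr n ≤ (i : ℕ) ∧ i = σn n i) := by
        rintro ⟨hri, hk⟩
        have h2 := congrArg Fin.val hk
        have hi := i.isLt
        simp only [σn] at h2
        omega
      simp [hU, hns]
    · simp [hU, h1]
  have hVe : ∀ k j : Fin n, V k j = (if k = j then 1 else 0) +
      (if (k : ℕ) < rr n ∧ rr n ≤ (j : ℕ) then
        -(((X : ℤ[X]) ^ (j : ℕ) %ₘ p).coeff (k : ℕ)) else 0) := by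
    intro k j
    by_cases h1 : k = j
    · subst h1
      have hns : ¬ ((k : ℕ) < rr n ∧ rr n ≤ (k : ℕ)) := by omega
      simp [hV, hns]
    · simp [hV, h1]
  refine ⟨U, V, ?_, ?_, ?_⟩
  · left
    rw [Matrix.det_of_lowerTriangular U (by
      intro i j hij
      have hij' : (i : ℕ) < (j : ℕ) := hij
      have hne : i ≠ j := by
        intro h; rw [h] at hij'; omega
      have hns : ¬ (rr n ≤ (i : ℕ) ∧ j = σn n i) := by
        rintro ⟨hri, hk⟩
        have h2 := congrArg Fin.val hk
        have hi := i.isLt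
        simp only [σn] at h2
        omega
      simp [hU, hne, hns])]
    simp [hU]
  · left
    rw [Matrix.det_of_upperTriangular (by
      intro i j hij
      have hij' : (j : ℕ) < (i : ℕ) := hij
      have hne : i ≠ j := by
        intro h; rw [h] at hij'; omega
      have hns : ¬ ((i : ℕ) < rr n ∧ rr n ≤ (j : ℕ)) := by omega
      simp [hV, hne, hns])]
    simp [hV]
  · have hWc : ∀ (i j : Fin n), WQAn n i j = Wc n i (j : ℕ) := fun i j => rfl
    have hUW : ∀ i j : Fin n, (U * WQAn n) i j =
        if rr n ≤ (i : ℕ) then 0 else Wc n i (j : ℕ) := by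
      intro i j
      rw [Matrix.mul_apply]
      simp only [hUe, add_mul, ite_mul, one_mul, zero_mul, neg_mul, neg_one_mul,
        Finset.sum_add_distrib]
      rw [Finset.sum_ite_eq Finset.univ i (fun k => WQAn n k j)]
      by_cases hri : rr n ≤ (i : ℕ)
      · simp only [hri, true_and, Finset.mem_univ, if_true]
        rw [Finset.sum_ite_eq' Finset.univ (σn n i) (fun k => -(WQAn n k j))]
        simp [hWc, Wc_symm, hri]
      · simp [hri, hWc]
    ext i j
    rw [Matrix.mul_apply]
    simp only [hUW, Matrix.of_apply]
    by_cases hri : rr n ≤ (i : ℕ)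
    · have hno : ¬ ((i : ℕ) < r ∧ (j : ℕ) < r) := by omega
      simp [hri, hno]
    · simp only [hri, if_false]
      simp only [hVe, mul_add, mul_ite, mul_one, mul_zero, mul_neg,
        Finset.sum_add_distrib]
      rw [Finset.sum_ite_eq' Finset.univ j (fun k => Wc n i (k : ℕ))]
      by_cases hrj : rr n ≤ (j : ℕ)
      · have hno : ¬ ((i : ℕ) < r ∧ (j : ℕ) < r) := by omega
        have hsum : (∑ k : Fin n, if (k : ℕ) < rr n ∧ rr n ≤ (j : ℕ) then
            -(Wc n i (k : ℕ) * ((X : ℤ[X]) ^ (j : ℕ) %ₘ p).coeff (k : ℕ)) else 0)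
            = -(∑ t ∈ Finset.range (rr n),
              (((X : ℤ[X]) ^ (j : ℕ) %ₘ p).coeff t) * Wc n i t) := by
          rw [← Finset.sum_neg_distrib]
          rw [Fin.sum_univ_eq_sum_range (fun k => if k < rr n ∧ rr n ≤ (j : ℕ) then
            -(Wc n i k * ((X : ℤ[X]) ^ (j : ℕ) %ₘ p).coeff k) else 0) n]
          rw [← Finset.sum_filter]
          have hfil : (Finset.range n).filter
              (fun k => k < rr n ∧ rr n ≤ (j : ℕ)) = Finset.range (rr n) := by
            ext t
            simp only [Finset.mem_filter, Finset.mem_range]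
            constructor
            · rintro ⟨_, h2, _⟩; exact h2
            · intro h2; exact ⟨lt_of_lt_of_le h2 hrn, h2, hrj⟩
          rw [hfil]
          apply Finset.sum_congr rfl
          intro t _; ring
        have hrel := Wc_rel n hrpos i (j : ℕ)
        rw [← hp] at hrel
        rw [hsum, ← hrel]
        simp [hno]
      · have hyes : (i : ℕ) < r ∧ (j : ℕ) < r := by omega
        simp [hrj, hWc, hyes]
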